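/- Let G be the simple graph obtained from a triangle K on 3 vertices by adding four new vertices x1, y1, x2, y2 with edges x1y1 and x2y2, where each of x1, y1, x2, y2 has at least two neighbors in K. Then G contains a cycle of length 4 and a cycle of length 6. -/
import Mathlib

/-- `G` contains a cycle of length `k`. -/
def HasCycleOfLength {V : Type*} (G : SimpleGraph V) (k : ℕ) : Prop :=
  ∃ (v : V) (c : G.Walk v v), c.IsCycle ∧ c.length = k

lemma cycle4 {V : Type*} (G : SimpleGraph V) {a b c d : V}
    (hab : G.Adj a b) (hbc : G.Adj b c) (hcd : G.Adj c d) (hda : G.Adj d a)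
    (h1 : a ≠ c) (h2 : b ≠ d) : HasCycleOfLength G 4 := by
  refine ⟨a, .cons hab (.cons hbc (.cons hcd hda.toWalk)), ?_, rfl⟩
  have := h1.symm; have := h2.symm
  simp [SimpleGraph.Walk.isCycle_def, SimpleGraph.Walk.isTrail_def, List.Nodup]
  simp_all [Sym2.eq_iff, hab.ne, hbc.ne, hcd.ne, hda.ne, hab.ne', hbc.ne', hcd.ne', hda.ne']

lemma cycle6 {V : Type*} (G : SimpleGraph V) {a b c d e f : V}
    (hab : G.Adj a b) (hbc : G.Adj b c) (hcd : G.Adj c d) (hde : G.Adj d e)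
    (hef : G.Adj e f) (hfa : G.Adj f a)
    (h1 : a ≠ c) (h2 : a ≠ d) (h3 : a ≠ e) (h4 : b ≠ d) (h5 : b ≠ e) (h6 : b ≠ f)
    (h7 : c ≠ e) (h8 : c ≠ f) (h9 : d ≠ f) : HasCycleOfLength G 6 := by
  refine ⟨a, .cons hab (.cons hbc (.cons hcd (.cons hde (.cons hef hfa.toWalk)))), ?_, rfl⟩
  have := h1.symm; have := h2.symm; have := h3.symm; have := h4.symm; have := h5.symm
  have := h6.symm; have := h7.symm; have := h8.symm; have := h9.symm
  simp [SimpleGraph.Walk.isCycle_def, SimpleGraph.Walk.isTrail_def, List.Nodup]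
  simp_all [Sym2.eq_iff, hab.ne, hbc.ne, hcd.ne, hde.ne, hef.ne, hfa.ne,
    hab.ne', hbc.ne', hcd.ne', hde.ne', hef.ne', hfa.ne']

lemma inter_nonempty {V : Type*} (K : Finset V) (hK : K.card = 3) {A B : Set V}
    (hA : A ⊆ ↑K) (hB : B ⊆ ↑K) (h2A : 2 ≤ A.ncard) (h2B : 2 ≤ B.ncard) :
    (A ∩ B).Nonempty := by
  have hKfin : (↑K : Set V).Finite := K.finite_toSet
  have hAf : A.Finite := hKfin.subset hA
  have hBf : B.Finite := hKfin.subset hB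
  have h := Set.ncard_inter_add_ncard_union A B hAf hBf
  have hU : (A ∪ B).ncard ≤ 3 := by
    have := Set.ncard_le_ncard (Set.union_subset hA hB) hKfin
    simpa [hK] using this
  exact Set.nonempty_of_ncard_ne_zero (by omega)

theorem stmt_2 {V : Type*} [DecidableEq V] (G : SimpleGraph V) (K : Finset V) (x₁ y₁ x₂ y₂ : V)
    (hK : K.card = 3)
    (hKcomplete : ∀ u ∈ K, ∀ v ∈ K, u ≠ v → G.Adj u v)
    (hx₁ : x₁ ∉ K) (hy₁ : y₁ ∉ K) (hx₂ : x₂ ∉ K) (hy₂ : y₂ ∉ K)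
    (hdist : ({x₁, y₁, x₂, y₂} : Finset V).card = 4)
    (hadj₁ : G.Adj x₁ y₁) (hadj₂ : G.Adj x₂ y₂)
    (hn₁ : 2 ≤ {v ∈ (K : Set V) | G.Adj x₁ v}.ncard)
    (hn₂ : 2 ≤ {v ∈ (K : Set V) | G.Adj y₁ v}.ncard)
    (hn₃ : 2 ≤ {v ∈ (K : Set V) | G.Adj x₂ v}.ncard)
    (hn₄ : 2 ≤ {v ∈ (K : Set V) | G.Adj y₂ v}.ncard) :
    HasCycleOfLength G 4 ∧ HasCycleOfLength G 6 := by
  -- distinctness of the outer vertices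
  have hne : x₁ ≠ x₂ ∧ x₁ ≠ y₂ ∧ y₁ ≠ x₂ ∧ y₁ ≠ y₂ := by
    have key : ∀ a b c : V, ({a,b,c} : Finset V).card ≤ 3 := by
      intro a b c
      calc ({a,b,c} : Finset V).card ≤ ({b,c} : Finset V).card + 1 := Finset.card_insert_le _ _
        _ ≤ ({c} : Finset V).card + 1 + 1 := Nat.add_le_add_right (Finset.card_insert_le _ _) 1
        _ = 3 := by simp
    refine ⟨?_, ?_, ?_, ?_⟩ <;> intro h <;> subst h
    · have e : ({x₁, y₁, x₁, y₂} : Finset V) = {x₁, y₁, y₂} := by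
        ext v; simp only [Finset.mem_insert, Finset.mem_singleton]; tauto
      rw [e] at hdist; have := key x₁ y₁ y₂; omega
    · have e : ({x₁, y₁, x₂, x₁} : Finset V) = {x₁, y₁, x₂} := by
        ext v; simp only [Finset.mem_insert, Finset.mem_singleton]; tauto
      rw [e] at hdist; have := key x₁ y₁ x₂; omega
    · have e : ({x₁, y₁, y₁, y₂} : Finset V) = {x₁, y₁, y₂} := by
        ext v; simp only [Finset.mem_insert, Finset.mem_singleton]; tauto
      rw [e] at hdist; have := key x₁ y₁ y₂; omega
    · have e : ({x₁, y₁, x₂, y₁} : Finset V) = {x₁, y₁, x₂} := by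
        ext v; simp only [Finset.mem_insert, Finset.mem_singleton]; tauto
      rw [e] at hdist; have := key x₁ y₁ x₂; omega
  obtain ⟨hx₁x₂, hx₁y₂, hy₁x₂, hy₁y₂⟩ := hne
  have hsub₁ : {v ∈ (K : Set V) | G.Adj x₁ v} ⊆ ↑K := Set.sep_subset _ _
  have hsub₂ : {v ∈ (K : Set V) | G.Adj y₁ v} ⊆ ↑K := Set.sep_subset _ _
  have hsub₃ : {v ∈ (K : Set V) | G.Adj x₂ v} ⊆ ↑K := Set.sep_subset _ _
  have hsub₄ : {v ∈ (K : Set V) | G.Adj y₂ v} ⊆ ↑K := Set.sep_subset _ _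
  have nmem : ∀ {a w : V}, w ∈ (K : Set V) → a ∉ K → a ≠ w :=
    fun hw ha h => ha (by rw [h]; exact hw)
  constructor
  · -- C4
    obtain ⟨u, huK, hux⟩ : ∃ u, u ∈ (K : Set V) ∧ G.Adj x₁ u := by
      obtain ⟨u, hu⟩ := Set.nonempty_of_ncard_ne_zero (s := {v ∈ (K : Set V) | G.Adj x₁ v})
        (by omega)
      exact ⟨u, hu.1, hu.2⟩
    obtain ⟨v, hv, hvu⟩ := Set.exists_ne_of_one_lt_ncard
      (s := {v ∈ (K : Set V) | G.Adj y₁ v}) (by omega) u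
    exact cycle4 G hadj₁ hv.2 (hKcomplete v hv.1 u huK hvu) hux.symm
      (nmem hv.1 hx₁) (nmem huK hy₁)
  · -- C6
    obtain ⟨m, hm₂, hm₃⟩ := inter_nonempty K hK hsub₂ hsub₃ hn₂ hn₃
    obtain ⟨n, hn₁', hn₄'⟩ := inter_nonempty K hK hsub₁ hsub₄ hn₁ hn₄
    have hmK : m ∈ (K : Set V) := hm₂.1
    have hnK : n ∈ (K : Set V) := hn₁'.1
    by_cases hmn : m = n
    · subst hmn
      obtain ⟨p, hp, hpm⟩ := Set.exists_ne_of_one_lt_ncard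
        (s := {v ∈ (K : Set V) | G.Adj y₁ v}) (by omega) m
      obtain ⟨q, hq, hqm⟩ := Set.exists_ne_of_one_lt_ncard
        (s := {v ∈ (K : Set V) | G.Adj x₂ v}) (by omega) m
      by_cases hpq : p = q
      · -- cycle x₁ y₁ p x₂ y₂ m
        subst hpq
        exact cycle6 G hadj₁ hp.2 hq.2.symm hadj₂ hn₄'.2 hn₁'.2.symm
          (nmem hp.1 hx₁) hx₁x₂ hx₁y₂ hy₁x₂ hy₁y₂ (nmem hmK hy₁)
          (nmem hp.1 hy₂).symm hpm (nmem hmK hx₂)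
      · -- cycle x₁ y₁ p q x₂ m
        exact cycle6 G hadj₁ hp.2 (hKcomplete p hp.1 q hq.1 hpq) hq.2.symm hm₃.2 hn₁'.2.symm
          (nmem hp.1 hx₁) (nmem hq.1 hx₁) hx₁x₂
          (nmem hq.1 hy₁) hy₁x₂ (nmem hmK hy₁)
          (nmem hp.1 hx₂).symm hpm hqm
    · -- cycle x₁ y₁ m x₂ y₂ n
      exact cycle6 G hadj₁ hm₂.2 hm₃.2.symm hadj₂ hn₄'.2 hn₁'.2.symm
        (nmem hmK hx₁) hx₁x₂ hx₁y₂ hy₁x₂ hy₁y₂ (nmem hnK hy₁)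
        (nmem hmK hy₂).symm hmn (nmem hnK hx₂)
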